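/- For every u, v ∈ W and every choice of reduced word for u, the Billey polynomial σ_v(u) ∈ R is nonzero if and only if v ≤ u in Bruhat order, i.e. if and only if some reduced word for u contains a subsequence that is a reduced word for v. -/

import Mathlib

noncomputable section

open MvPolynomial
open scoped Classical

/-- The polynomial ring `R = ℂ[x₁, …, xₙ]`. -/
abbrev BilleyR (n : ℕ) := MvPolynomial (Fin n) ℂ

/-- The simple transposition `sᵢ = (i, i+1)` in the symmetric group on `{1, …, n}`. -/
def sTr (n : ℕ) (i : Fin (n - 1)) : Equiv.Perm (Fin n) :=
  Equiv.swap ⟨i.1, by have := i.isLt; omega⟩ ⟨i.1 + 1, by have := i.isLt; omega⟩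

/-- The length `ℓ(w)`: the minimal `k` such that `w` is a product of `k` simple
transpositions. -/
def len (n : ℕ) (w : Equiv.Perm (Fin n)) : ℕ :=
  sInf {k | ∃ l : List (Fin (n - 1)), l.length = k ∧ (l.map (sTr n)).prod = w}

/-- `l` is a reduced word for `w`: the product of the corresponding simple transpositions
is `w` and the length of `l` is `ℓ(w)`. -/
def IsRedWord (n : ℕ) (l : List (Fin (n - 1))) (w : Equiv.Perm (Fin n)) : Prop :=
  (l.map (sTr n)).prod = w ∧ l.length = len n w

/-- The simple root `αᵢ = xᵢ - x_{i+1}`. -/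
def alphaR (n : ℕ) (i : Fin (n - 1)) : BilleyR n :=
  X ⟨i.1, by have := i.isLt; omega⟩ - X ⟨i.1 + 1, by have := i.isLt; omega⟩

/-- Given a word `b = (b₁, …, b_m)`, the polynomial
`r(j, u) = (s_{b₁} ⋯ s_{b_{j-1}})(α_{b_j})` (with `j` zero-indexed here). -/
def rPoly (n : ℕ) (b : List (Fin (n - 1))) (j : Fin b.length) : BilleyR n :=
  rename (⇑(((b.take j.1).map (sTr n)).prod)) (alphaR n (b.get j))

/-- Billey's formula with respect to the word `b` for `u`:
`σ_v(u) = Σ ∏ₜ r(jₜ, u)`, summed over all strictly increasing index sequences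
`j₁ < ⋯ < j_{ℓ(v)}` into `b` such that `s_{b_{j₁}} ⋯ s_{b_{j_{ℓ(v)}}} = v`. -/
def billeyWord (n : ℕ) (b : List (Fin (n - 1))) (v : Equiv.Perm (Fin n)) : BilleyR n :=
  ∑ J ∈ Finset.univ.filter (fun J : Finset (Fin b.length) =>
      J.card = len n v ∧
        ((J.sort (· ≤ ·)).map (fun j => sTr n (b.get j))).prod = v),
    ∏ j ∈ J, rPoly n b j

/-- The Billey polynomial `σ_v(u)`, computed from a choice of reduced word for `u`
(its value is independent of this choice). -/
def sigma (n : ℕ) (v u : Equiv.Perm (Fin n)) : BilleyR n :=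
  if h : ∃ b : List (Fin (n - 1)), IsRedWord n b u then billeyWord n h.choose v else 0

/-- The standard parabolic subgroup `W_P` generated by `{sᵢ : i ∈ P}`. -/
def WPar (n : ℕ) (P : Set (Fin (n - 1))) : Subgroup (Equiv.Perm (Fin n)) :=
  Subgroup.closure (sTr n '' P)

/-- The set `W^P` of minimal-length coset representatives of `W / W_P`. -/
def minReps (n : ℕ) (P : Set (Fin (n - 1))) : Set (Equiv.Perm (Fin n)) :=
  {v | ∀ u ∈ WPar n P, len n v ≤ len n (v * u)}

/-- Bruhat order on `W`: `v ≤ u` iff some reduced word for `u` contains a subsequence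
that is a reduced word for `v`. -/
def bruhatLE (n : ℕ) (v u : Equiv.Perm (Fin n)) : Prop :=
  ∃ b : List (Fin (n - 1)), IsRedWord n b u ∧
    ∃ c : List (Fin (n - 1)), c.Sublist b ∧ IsRedWord n c v

namespace BilleyAux
variable {n : ℕ}

def loF (i : Fin (n-1)) : Fin n := ⟨i.1, by have := i.isLt; omega⟩
def hiF (i : Fin (n-1)) : Fin n := ⟨i.1+1, by have := i.isLt; omega⟩

lemma loF_lt_hiF (i : Fin (n-1)) : loF i < hiF i := by
  simp [loF, hiF, Fin.lt_def]

lemma loF_ne_hiF (i : Fin (n-1)) : loF i ≠ hiF i := ne_of_lt (loF_lt_hiF i)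

lemma sTr_eq (i : Fin (n-1)) : sTr n i = Equiv.swap (loF i) (hiF i) := rfl

/-- word product -/
def wp (b : List (Fin (n-1))) : Equiv.Perm (Fin n) := (b.map (sTr n)).prod

@[simp] lemma wp_nil : wp ([] : List (Fin (n-1))) = 1 := rfl

lemma wp_append (b c : List (Fin (n-1))) : wp (b ++ c) = wp b * wp c := by
  simp [wp]

lemma wp_concat (b : List (Fin (n-1))) (i : Fin (n-1)) :
    wp (b ++ [i]) = wp b * sTr n i := by
  simp [wp]

lemma wp_cons (i : Fin (n-1)) (b : List (Fin (n-1))) :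
    wp (i :: b) = sTr n i * wp b := by
  simp [wp]

lemma sTr_mul_self (i : Fin (n-1)) : sTr n i * sTr n i = 1 := by
  rw [sTr_eq]; exact Equiv.swap_mul_self _ _

lemma len_le_length {b : List (Fin (n-1))} {w : Equiv.Perm (Fin n)} (h : wp b = w) :
    len n w ≤ b.length := Nat.sInf_le ⟨b, rfl, h⟩

end BilleyAux
namespace BilleyAux

lemma sTr_eq' {n : ℕ} (i : Fin (n-1)) (p q : Fin n) (hp : p.1 = i.1) (hq : q.1 = i.1 + 1) :
    sTr n i = Equiv.swap p q := by
  rw [sTr_eq]; congr 1 <;> [skip; skip] <;> apply Fin.ext <;> simp [loF, hiF, hp, hq]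

lemma swap_mem_closure {n : ℕ} : ∀ (p q : Fin n), p < q →
    Equiv.swap p q ∈ Subgroup.closure (Set.range (sTr n)) := by
  suffices key : ∀ d : ℕ, ∀ p q : Fin n, p < q → q.1 - p.1 ≤ d →
      Equiv.swap p q ∈ Subgroup.closure (Set.range (sTr n)) by
    intro p q h; exact key _ p q h le_rfl
  intro d
  induction d with
  | zero => intro p q h h2; rw [Fin.lt_def] at h; omega
  | succ d ih =>
    intro p q h h2
    rw [Fin.lt_def] at h
    by_cases hadj : q.1 = p.1 + 1
    · have hp : p.1 < n - 1 := by have := q.isLt; omega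
      have : sTr n ⟨p.1, hp⟩ = Equiv.swap p q := sTr_eq' _ _ _ rfl (by simpa using hadj)
      rw [← this]
      exact Subgroup.subset_closure ⟨_, rfl⟩
    · have hq1 : 1 ≤ q.1 := by omega
      set q' : Fin n := ⟨q.1 - 1, by omega⟩ with hq'
      have hpq' : p < q' := by rw [Fin.lt_def]; simp [hq']; omega
      have hq'q : q' < q := by rw [Fin.lt_def]; simp [hq']; omega
      have h1 : Equiv.swap q' q ∈ Subgroup.closure (Set.range (sTr n)) := by
        have hp : q'.1 < n - 1 := by have := q.isLt; simp [hq']; omega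
        have : sTr n ⟨q'.1, hp⟩ = Equiv.swap q' q := sTr_eq' _ _ _ rfl (by simp [hq']; omega)
        rw [← this]; exact Subgroup.subset_closure ⟨_, rfl⟩
      have h2' : Equiv.swap p q' ∈ Subgroup.closure (Set.range (sTr n)) := by
        apply ih p q' hpq'; simp [hq']; omega
      have hid : Equiv.swap p q
          = Equiv.swap q' q * Equiv.swap p q' * (Equiv.swap q' q)⁻¹ := by
        have := Equiv.swap_apply_apply (Equiv.swap q' q) p q'
        rw [Equiv.swap_apply_of_ne_of_ne (ne_of_lt hpq') (by exact ne_of_lt (lt_trans hpq' hq'q)),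
          Equiv.swap_apply_left] at this
        exact this
      rw [hid]
      exact mul_mem (mul_mem h1 h2') (inv_mem h1)

lemma exists_word {n : ℕ} (w : Equiv.Perm (Fin n)) : ∃ b : List (Fin (n-1)), wp b = w := by
  have hmem : w ∈ Subgroup.closure (Set.range (sTr n)) := by
    induction (Equiv.Perm.truncSwapFactors w) using Trunc.ind with
    | _ l =>
      obtain ⟨hprod, hsw⟩ := l.2
      rw [← hprod]
      apply list_prod_mem
      intro x hx
      obtain ⟨a, b, hab, rfl⟩ := hsw x hx
      rcases lt_or_gt_of_ne hab with h | h
      · exact swap_mem_closure a b h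
      · rw [Equiv.swap_comm]; exact swap_mem_closure b a h
  rw [← Subgroup.mem_toSubmonoid, Subgroup.closure_toSubmonoid] at hmem
  obtain ⟨l, hl, hprod⟩ := Submonoid.exists_list_of_mem_closure hmem
  subst hprod
  clear hmem
  induction l with
  | nil => exact ⟨[], rfl⟩
  | cons x l ih =>
    obtain ⟨b, hb⟩ := ih (fun y hy => hl y (List.mem_cons_of_mem _ hy))
    have hx : ∃ i, sTr n i = x := by
      rcases hl x List.mem_cons_self with ⟨i, hi⟩ | hx'
      · exact ⟨i, hi⟩
      · obtain ⟨i, hi⟩ := hx'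
        refine ⟨i, ?_⟩
        have h2 : x⁻¹ = sTr n i := by simpa using hi.symm
        rw [← inv_inv x, h2, sTr_eq, Equiv.Perm.inv_def, Equiv.symm_swap]
    obtain ⟨i, hi⟩ := hx
    exact ⟨i :: b, by rw [wp_cons, hb, hi, List.prod_cons]⟩

end BilleyAux
namespace BilleyAux
variable {n : ℕ}

lemma exists_redword (w : Equiv.Perm (Fin n)) : ∃ b, IsRedWord n b w := by
  obtain ⟨b, hb⟩ := exists_word w
  have hne : {k | ∃ l : List (Fin (n - 1)), l.length = k ∧ (l.map (sTr n)).prod = w}.Nonempty :=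
    ⟨b.length, b, rfl, hb⟩
  obtain ⟨l, hl, hlp⟩ := Nat.sInf_mem hne
  exact ⟨l, hlp, hl⟩

lemma redword_wp {b : List (Fin (n-1))} {w : Equiv.Perm (Fin n)} (h : IsRedWord n b w) :
    wp b = w := h.1

lemma isRedWord_iff {b : List (Fin (n-1))} {w : Equiv.Perm (Fin n)} :
    IsRedWord n b w ↔ wp b = w ∧ b.length = len n w := Iff.rfl

lemma len_one : len n (1 : Equiv.Perm (Fin n)) = 0 :=
  Nat.le_zero.mp (len_le_length (b := []) rfl)

lemma eq_one_of_len_eq_zero {w : Equiv.Perm (Fin n)} (h : len n w = 0) : w = 1 := by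
  obtain ⟨b, hb⟩ := exists_redword w
  have hb0 : b = [] := List.length_eq_zero_iff.mp (hb.2.trans h)
  rw [← redword_wp hb, hb0, wp_nil]

lemma sign_wp (b : List (Fin (n-1))) : Equiv.Perm.sign (wp b) = (-1) ^ b.length := by
  unfold wp
  rw [← List.prod_hom _ Equiv.Perm.sign]
  rw [List.map_map]
  rw [List.prod_eq_pow_card _ (-1) ?_, List.length_map]
  intro x hx
  simp only [List.mem_map, Function.comp] at hx
  obtain ⟨i, _, rfl⟩ := hx
  rw [sTr_eq]
  exact Equiv.Perm.sign_swap (loF_ne_hiF i)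

lemma sign_eq_pow_len (w : Equiv.Perm (Fin n)) :
    Equiv.Perm.sign w = (-1) ^ len n w := by
  obtain ⟨b, hb⟩ := exists_redword w
  have h2 := sign_wp b
  rw [redword_wp hb, hb.2] at h2
  exact h2

lemma len_mul_swap_ne {w : Equiv.Perm (Fin n)} {p q : Fin n} (hpq : p ≠ q) :
    len n (w * Equiv.swap p q) ≠ len n w := by
  intro h
  have h1 := sign_eq_pow_len (w * Equiv.swap p q)
  rw [h, map_mul, Equiv.Perm.sign_swap hpq, sign_eq_pow_len w] at h1
  have h2 : (-1 : ℤˣ) ^ len n w * (-1) = (-1 : ℤˣ) ^ len n w * 1 := by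
    rw [mul_one]; exact h1
  have := mul_left_cancel h2
  simp at this

lemma len_mul_sTr_le (w : Equiv.Perm (Fin n)) (i : Fin (n-1)) :
    len n (w * sTr n i) ≤ len n w + 1 := by
  obtain ⟨b, hb⟩ := exists_redword w
  have : wp (b ++ [i]) = w * sTr n i := by rw [wp_concat, redword_wp hb]
  have h2 := len_le_length this
  simpa [hb.2] using h2

lemma len_le_len_mul_sTr_add_one (w : Equiv.Perm (Fin n)) (i : Fin (n-1)) :
    len n w ≤ len n (w * sTr n i) + 1 := by
  have := len_mul_sTr_le (w * sTr n i) i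
  rwa [mul_assoc, sTr_mul_self, mul_one] at this

/-- find a sign-change index -/
lemma exists_flip (P : ℕ → Prop) [DecidablePred P] :
    ∀ m, ¬ P 0 → P m → ∃ i < m, ¬ P i ∧ P (i+1) := by
  intro m
  induction m with
  | zero => intro h0 hm; exact absurd hm h0
  | succ m ih =>
    intro h0 hm
    by_cases hPm : P m
    · obtain ⟨i, hi, h⟩ := ih h0 hPm
      exact ⟨i, Nat.lt_succ_of_lt hi, h⟩
    · exact ⟨m, Nat.lt_succ_self m, hPm, hm⟩

/-- adjacent swap reversing a pair pins it down -/
lemma swap_reverses {i : Fin (n-1)} {a a' : Fin n} (h : a < a')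
    (h2 : sTr n i a' < sTr n i a) : a = loF i ∧ a' = hiF i := by
  rw [sTr_eq] at h2
  rcases eq_or_ne a (loF i) with rfl | ha
  · rcases eq_or_ne a' (hiF i) with rfl | ha'
    · exact ⟨rfl, rfl⟩
    · exfalso
      rw [Equiv.swap_apply_left, Equiv.swap_apply_of_ne_of_ne (fun hc => absurd hc.symm (ne_of_lt h)) ha'] at h2
      have := loF_lt_hiF i
      rw [Fin.lt_def] at *
      have : (hiF i).1 = (loF i).1 + 1 := rfl
      omega
  · rcases eq_or_ne a (hiF i) with rfl | ha2
    · exfalso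
      have ha' : a' ≠ loF i := fun hc => absurd (hc ▸ h) (not_lt.mpr (le_of_lt (loF_lt_hiF i)))
      have ha'2 : a' ≠ hiF i := ne_of_gt h
      rw [Equiv.swap_apply_right, Equiv.swap_apply_of_ne_of_ne ha' ha'2] at h2
      have := loF_lt_hiF i
      rw [Fin.lt_def] at *
      omega
    · exfalso
      rw [Equiv.swap_apply_of_ne_of_ne ha ha2] at h2
      rcases eq_or_ne a' (loF i) with rfl | hb
      · rw [Equiv.swap_apply_left] at h2
        rw [Fin.lt_def] at *
        have h3 : (hiF i).1 = (loF i).1 + 1 := rfl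
        have h4 : a.1 ≠ (loF i).1 := fun hc => ha (Fin.ext hc)
        have h5 : a.1 ≠ (hiF i).1 := fun hc => ha2 (Fin.ext hc)
        omega
      · rcases eq_or_ne a' (hiF i) with rfl | hb2
        · rw [Equiv.swap_apply_right] at h2
          rw [Fin.lt_def] at *
          have h3 : (hiF i).1 = (loF i).1 + 1 := rfl
          have h4 : a.1 ≠ (loF i).1 := fun hc => ha (Fin.ext hc)
          have h5 : a.1 ≠ (hiF i).1 := fun hc => ha2 (Fin.ext hc)
          omega
        · rw [Equiv.swap_apply_of_ne_of_ne hb hb2] at h2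
          exact absurd h2 (not_lt.mpr (le_of_lt h))

theorem strong_exchange (b : List (Fin (n-1))) (p q : Fin n) (hpq : p < q)
    (h : wp b q < wp b p) :
    ∃ k < b.length, wp (b.eraseIdx k) = wp b * Equiv.swap p q := by
  classical
  set m := b.length with hm
  set c : ℕ → Equiv.Perm (Fin n) := fun k => wp (b.drop k) with hc
  have hc0 : c 0 = wp b := by simp [hc]
  have hcm : c m = 1 := by simp [hc, hm]
  have hstep : ∀ k (hk : k < b.length), c k = sTr n (b.get ⟨k, hk⟩) * c (k+1) := by
    intro k hk
    have hD : b.drop k = b.get ⟨k, hk⟩ :: b.drop (k+1) := by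
      rw [List.drop_eq_getElem_cons hk]; rfl
    show wp (b.drop k) = _ * wp (b.drop (k+1))
    rw [hD, wp_cons]
  set P : ℕ → Prop := fun k => (c k p) < (c k q) with hP
  have h0 : ¬ P 0 := by simp [hP, hc0]; exact le_of_lt h
  have hm' : P m := by simp [hP, hcm]; exact hpq
  obtain ⟨k, hk, hPk, hPk1⟩ := exists_flip P m h0 hm'
  refine ⟨k, hk, ?_⟩
  have hk' : k < b.length := hk
  set i := b.get ⟨k, hk'⟩ with hi
  set d := c (k+1) with hd
  have hck : c k = sTr n i * d := hstep k hk'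
  have hrev : d p = loF i ∧ d q = hiF i := by
    apply swap_reverses (by simpa [hP] using hPk1)
    have : ¬ (sTr n i (d p) < sTr n i (d q)) := by
      rw [← Equiv.Perm.mul_apply, ← Equiv.Perm.mul_apply, ← hck]
      simpa [hP] using hPk
    rcases lt_trichotomy (sTr n i (d q)) (sTr n i (d p)) with h' | h' | h'
    · exact h'
    · exfalso
      have : d q = d p := (Equiv.injective _) h'
      have : q = p := (Equiv.injective _) this
      exact absurd this (ne_of_gt hpq)
    · exact absurd h' this
  have herase : b.eraseIdx k = b.take k ++ b.drop (k+1) := List.eraseIdx_eq_take_drop_succ b k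
  have hsplit : wp b = wp (b.take k) * sTr n i * d := by
    have hck' : wp (b.drop k) = sTr n i * d := hck
    conv_lhs => rw [← List.take_append_drop k b]
    rw [wp_append, hck', mul_assoc]
  have hd' : d p = loF i := hrev.1
  have hd'' : d q = hiF i := hrev.2
  have s2 : Equiv.swap p q = d⁻¹ * sTr n i * d := by
    have h3 := Equiv.swap_apply_apply (d⁻¹ : Equiv.Perm (Fin n)) (loF i) (hiF i)
    rw [inv_inv] at h3
    have h4 : (d⁻¹ : Equiv.Perm (Fin n)) (loF i) = p := by
      rw [← hd']; exact d.symm_apply_apply p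
    have h5 : (d⁻¹ : Equiv.Perm (Fin n)) (hiF i) = q := by
      rw [← hd'']; exact d.symm_apply_apply q
    rw [h4, h5] at h3
    rw [h3, sTr_eq, mul_assoc]
  have hgoal : wp b * Equiv.swap p q = wp (b.take k) * d := by
    rw [hsplit, s2]
    simp only [mul_assoc, mul_inv_cancel_left]
    rw [show sTr n i * (sTr n i * d) = d from by rw [← mul_assoc, sTr_mul_self, one_mul]]
  rw [herase, wp_append, hgoal]

end BilleyAux
namespace BilleyAux
variable {n : ℕ}

lemma len_mul_sTr_ne (w : Equiv.Perm (Fin n)) (i : Fin (n-1)) :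
    len n (w * sTr n i) ≠ len n w := by
  rw [sTr_eq]; exact len_mul_swap_ne (loF_ne_hiF i)

lemma descent_of_gt {w : Equiv.Perm (Fin n)} {i : Fin (n-1)}
    (h : w (hiF i) < w (loF i)) : len n (w * sTr n i) < len n w := by
  obtain ⟨b, hb⟩ := exists_redword w
  obtain ⟨k, hk, hke⟩ := strong_exchange b (loF i) (hiF i) (loF_lt_hiF i)
    (by rw [redword_wp hb]; exact h)
  rw [redword_wp hb, ← sTr_eq] at hke
  have h1 : len n (w * sTr n i) ≤ (b.eraseIdx k).length := len_le_length hke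
  rw [List.length_eraseIdx_of_lt hk] at h1
  have h2 : 1 ≤ b.length := by omega
  have hby : b.length = len n w := hb.2
  omega

lemma ascent_of_lt {w : Equiv.Perm (Fin n)} {i : Fin (n-1)}
    (h : w (loF i) < w (hiF i)) : len n w < len n (w * sTr n i) := by
  have h2 : (w * sTr n i) (hiF i) < (w * sTr n i) (loF i) := by
    rw [Equiv.Perm.mul_apply, Equiv.Perm.mul_apply, sTr_eq,
      Equiv.swap_apply_left, Equiv.swap_apply_right]
    exact h
  have := descent_of_gt h2
  rwa [mul_assoc, sTr_mul_self, mul_one] at this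

lemma apply_ne {w : Equiv.Perm (Fin n)} {p q : Fin n} (h : p ≠ q) : w p ≠ w q :=
  fun hc => h (w.injective hc)

lemma descent_iff {w : Equiv.Perm (Fin n)} {i : Fin (n-1)} :
    len n (w * sTr n i) < len n w ↔ w (hiF i) < w (loF i) := by
  constructor
  · intro h
    rcases lt_or_gt_of_ne (apply_ne (loF_ne_hiF i) (w := w)) with h' | h'
    · exact absurd h (not_lt.mpr (le_of_lt (ascent_of_lt h')))
    · exact h'
  · exact descent_of_gt

lemma ascent_iff {w : Equiv.Perm (Fin n)} {i : Fin (n-1)} :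
    len n w < len n (w * sTr n i) ↔ w (loF i) < w (hiF i) := by
  constructor
  · intro h
    rcases lt_or_gt_of_ne (apply_ne (loF_ne_hiF i) (w := w)) with h' | h'
    · exact h'
    · exact absurd h (not_lt.mpr (le_of_lt (descent_of_gt h')))
  · exact ascent_of_lt

lemma swap_descent {u : Equiv.Perm (Fin n)} {p q : Fin n} (hpq : p < q)
    (h : len n (u * Equiv.swap p q) < len n u) : u q < u p := by
  by_contra hc
  have hne : u p ≠ u q := apply_ne (ne_of_lt hpq)
  have hlt : u p < u q := lt_of_le_of_ne (not_lt.mp hc) hne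
  set y := u * Equiv.swap p q with hy
  have hyp : y p = u q := by rw [hy, Equiv.Perm.mul_apply, Equiv.swap_apply_left]
  have hyq : y q = u p := by rw [hy, Equiv.Perm.mul_apply, Equiv.swap_apply_right]
  obtain ⟨c, hcred⟩ := exists_redword y
  obtain ⟨k, hk, hke⟩ := strong_exchange c p q hpq
    (by rw [redword_wp hcred, hyp, hyq]; exact hlt)
  rw [redword_wp hcred] at hke
  have hyu : y * Equiv.swap p q = u := by
    rw [hy, mul_assoc, Equiv.swap_mul_self, mul_one]
  rw [hyu] at hke
  have h1 : len n u ≤ (c.eraseIdx k).length := len_le_length hke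
  rw [List.length_eraseIdx_of_lt hk, hcred.2] at h1
  omega

lemma reduced_take {b : List (Fin (n-1))} {u : Equiv.Perm (Fin n)}
    (h : IsRedWord n b u) (k : ℕ) : IsRedWord n (b.take k) (wp (b.take k)) := by
  refine ⟨rfl, ?_⟩
  have hle : len n (wp (b.take k)) ≤ (b.take k).length := len_le_length rfl
  rcases eq_or_lt_of_le hle with he | hlt
  · exact he.symm
  · exfalso
    obtain ⟨t, ht⟩ := exists_redword (wp (b.take k))
    have hw : wp (t ++ b.drop k) = u := by
      rw [wp_append, redword_wp ht, ← wp_append, List.take_append_drop, redword_wp h]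
    have h1 : len n u ≤ t.length + (b.drop k).length := by
      have := len_le_length hw; simpa using this
    rw [ht.2] at *
    have h2 : (b.take k).length + (b.drop k).length = b.length := by
      rw [← List.length_append, List.take_append_drop]
    have h3 : b.length = len n u := h.2
    omega

lemma exists_reduced_sublist_aux : ∀ (N : ℕ) (b : List (Fin (n-1))), b.length ≤ N →
    ∃ c, c.Sublist b ∧ IsRedWord n c (wp b) := by
  intro N
  induction N using Nat.strong_induction_on with
  | _ N ih =>
  intro b hbN
  rcases eq_or_lt_of_le (len_le_length (rfl : wp b = wp b)) with he | hlt
  · exact ⟨b, List.Sublist.refl b, rfl, he.symm⟩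
  set Q : ℕ → Prop := fun j => len n (wp (b.take j)) ≠ (b.take j).length with hQdef
  have hQex : Q b.length := by simp [hQdef, List.take_length]; omega
  have hQ0 : ¬ Q 0 := by simp [hQdef, len_one]
  classical
  set j := Nat.find ⟨b.length, hQex⟩ with hj
  have hQj : Q j := Nat.find_spec ⟨b.length, hQex⟩
  have hmin : ∀ j' < j, ¬ Q j' := fun j' hj' => Nat.find_min ⟨b.length, hQex⟩ hj'
  have hjle : j ≤ b.length := Nat.find_min' ⟨b.length, hQex⟩ hQex
  have hj1 : 1 ≤ j := by
    rcases Nat.eq_zero_or_pos j with h0 | h1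
    · exact absurd (h0 ▸ hQj) hQ0
    · exact h1
  have hjlen : j - 1 < b.length := by omega
  set i : Fin (n-1) := b.get ⟨j-1, hjlen⟩ with hi
  set w' := wp (b.take (j-1)) with hw'
  have hred' : ¬ Q (j-1) := hmin (j-1) (by omega)
  have hlen' : len n w' = j - 1 := by
    have := hred'
    simp only [hQdef, not_not] at this
    rwa [List.length_take, Nat.min_eq_left (by omega)] at this
  have htake : b.take j = b.take (j-1) ++ [i] := by
    have : j = (j-1) + 1 := by omega
    rw [this, List.take_succ]
    congr 1
    rw [List.getElem?_eq_getElem hjlen]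
    rfl
  have hwj : wp (b.take j) = w' * sTr n i := by rw [htake, wp_concat]
  have hlenj : len n (wp (b.take j)) ≠ j := by
    have := hQj
    simp only [hQdef] at this
    rwa [List.length_take, Nat.min_eq_left hjle] at this
  have hne2 : len n (wp (b.take j)) ≠ j - 1 := by
    rw [hwj, ← hlen']
    exact len_mul_sTr_ne w' i
  have hlej : len n (wp (b.take j)) ≤ j := by
    have := len_le_length (rfl : wp (b.take j) = wp (b.take j))
    rwa [List.length_take, Nat.min_eq_left hjle] at this
  have hdesc : len n (w' * sTr n i) < len n w' := by
    rw [← hwj, hlen']; omega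
  have hgt := descent_iff.mp hdesc
  obtain ⟨k, hk, hke⟩ := strong_exchange (b.take (j-1)) (loF i) (hiF i) (loF_lt_hiF i) hgt
  rw [← sTr_eq, ← hwj] at hke
  set c0 := (b.take (j-1)).eraseIdx k ++ b.drop j with hc0
  have hwc0 : wp c0 = wp b := by
    rw [hc0, wp_append, hke, hwj, ← wp_concat, ← htake, ← wp_append, List.take_append_drop]
  have hlc0 : c0.length < b.length := by
    rw [hc0, List.length_append, List.length_eraseIdx_of_lt hk,
      List.length_take, List.length_drop, Nat.min_eq_left (by omega)]
    have : k < j - 1 := by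
      have := hk
      rwa [List.length_take, Nat.min_eq_left (by omega)] at this
    omega
  have hsub : c0.Sublist b := by
    have h1 : ((b.take (j-1)).eraseIdx k).Sublist (b.take (j-1)) := List.eraseIdx_sublist _ k
    have h2 : (b.take (j-1)).Sublist (b.take j) := by
      rw [htake]; exact List.sublist_append_left _ _
    have h3 : c0.Sublist (b.take j ++ b.drop j) :=
      List.Sublist.append (h1.trans h2) (List.Sublist.refl _)
    rwa [List.take_append_drop] at h3
  obtain ⟨c, hcs, hcred⟩ := ih c0.length (by omega) c0 le_rfl
  exact ⟨c, hcs.trans hsub, by rwa [hwc0] at hcred⟩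

lemma exists_reduced_sublist (b : List (Fin (n-1))) :
    ∃ c, c.Sublist b ∧ IsRedWord n c (wp b) :=
  exists_reduced_sublist_aux b.length b le_rfl

end BilleyAux
namespace BilleyAux
variable {n : ℕ}

/-- One step down in the Bruhat order: multiply by a reflection, decreasing length. -/
def stepR (n : ℕ) (x y : Equiv.Perm (Fin n)) : Prop :=
  (∃ p q : Fin n, p ≠ q ∧ y = x * Equiv.swap p q) ∧ len n y < len n x

/-- Bruhat order via chains of reflections. -/
def Rle (n : ℕ) (v u : Equiv.Perm (Fin n)) : Prop :=
  Relation.ReflTransGen (stepR n) u v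

lemma Rle_refl (u : Equiv.Perm (Fin n)) : Rle n u u := Relation.ReflTransGen.refl

lemma Rle_trans {u v w : Equiv.Perm (Fin n)} (h1 : Rle n v u) (h2 : Rle n w v) :
    Rle n w u := Relation.ReflTransGen.trans h1 h2

lemma Rle_step {u : Equiv.Perm (Fin n)} {p q : Fin n} (hpq : p ≠ q)
    (hlen : len n (u * Equiv.swap p q) < len n u) : Rle n (u * Equiv.swap p q) u :=
  Relation.ReflTransGen.single ⟨⟨p, q, hpq, rfl⟩, hlen⟩

lemma Rle_mul_sTr {u : Equiv.Perm (Fin n)} {i : Fin (n-1)}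
    (h : len n (u * sTr n i) < len n u) : Rle n (u * sTr n i) u := by
  rw [sTr_eq] at *
  exact Rle_step (loF_ne_hiF i) h

lemma Rle_len_le {u v : Equiv.Perm (Fin n)} (h : Rle n v u) : len n v ≤ len n u := by
  induction h with
  | refl => exact le_rfl
  | tail _ h2 ih => exact le_trans (le_of_lt h2.2) ih

lemma step_subword {u y : Equiv.Perm (Fin n)} {b : List (Fin (n-1))}
    (hstep : stepR n u y) (hb : IsRedWord n b u) :
    ∃ c, c.Sublist b ∧ IsRedWord n c y := by
  obtain ⟨⟨p, q, hpq, rfl⟩, hlen⟩ := hstep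
  have key : ∀ p q : Fin n, p < q → len n (u * Equiv.swap p q) < len n u →
      ∃ c, c.Sublist b ∧ IsRedWord n c (u * Equiv.swap p q) := by
    intro p q hpq hlen
    have hd := swap_descent hpq hlen
    obtain ⟨k, hk, hke⟩ := strong_exchange b p q hpq
      (by rw [redword_wp hb]; exact hd)
    rw [redword_wp hb] at hke
    obtain ⟨c, hcs, hcred⟩ := exists_reduced_sublist (b.eraseIdx k)
    rw [hke] at hcred
    exact ⟨c, hcs.trans (List.eraseIdx_sublist _ k), hcred⟩
  rcases lt_or_gt_of_ne hpq with h | h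
  · exact key p q h hlen
  · rw [Equiv.swap_comm] at *
    exact key q p h hlen

lemma claimA {u v : Equiv.Perm (Fin n)} (h : Rle n v u) :
    ∀ b, IsRedWord n b u → ∃ c, c.Sublist b ∧ IsRedWord n c v := by
  induction h using Relation.ReflTransGen.head_induction_on with
  | refl => exact fun b hb => ⟨b, List.Sublist.refl b, hb⟩
  | head h' _ ih =>
    intro b hb
    obtain ⟨d, hds, hdred⟩ := step_subword h' hb
    obtain ⟨c, hcs, hcred⟩ := ih d hdred
    exact ⟨c, hcs.trans hds, hcred⟩

end BilleyAux
namespace BilleyAux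
variable {n : ℕ}

lemma sTr_inv (i : Fin (n-1)) : (sTr n i)⁻¹ = sTr n i := by
  rw [sTr_eq, Equiv.Perm.inv_def, Equiv.symm_swap]

lemma mul_sTr_sTr (a : Equiv.Perm (Fin n)) (i : Fin (n-1)) :
    a * sTr n i * sTr n i = a := by rw [mul_assoc, sTr_mul_self, mul_one]

lemma step_conj {a w : Equiv.Perm (Fin n)} {i : Fin (n-1)}
    (h : ∃ p q : Fin n, p ≠ q ∧ w = a * Equiv.swap p q) :
    ∃ p q : Fin n, p ≠ q ∧ w * sTr n i = (a * sTr n i) * Equiv.swap p q := by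
  obtain ⟨p, q, hpq, rfl⟩ := h
  refine ⟨sTr n i p, sTr n i q, apply_ne hpq, ?_⟩
  have hsw : Equiv.swap (sTr n i p) (sTr n i q) = sTr n i * Equiv.swap p q * (sTr n i)⁻¹ :=
    Equiv.swap_apply_apply (sTr n i) p q
  rw [hsw, sTr_inv]
  simp only [← mul_assoc]
  rw [mul_sTr_sTr]

/-- If `a → w` is a Bruhat step and `s` is a right descent of `a` then either `w = a s`
or `ℓ(w s) ≤ ℓ(a) - 2`. -/
lemma step_aux {a w : Equiv.Perm (Fin n)} {i : Fin (n-1)} (h' : stepR n a w)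
    (hdesc : len n (a * sTr n i) < len n a) :
    w = a * sTr n i ∨ (len n (w * sTr n i) ≤ len n a - 2 ∧ 2 ≤ len n a) := by
  obtain ⟨⟨p, q, hpq, rfl⟩, hlen⟩ := h'
  obtain ⟨d, hd⟩ := exists_redword (a * sTr n i)
  have hb : IsRedWord n (d ++ [i]) a := by
    constructor
    · show wp (d ++ [i]) = a
      rw [wp_concat, redword_wp hd, mul_sTr_sTr]
    · rw [List.length_append, List.length_singleton, hd.2]
      have := len_le_len_mul_sTr_add_one a i
      omega
  have key : ∀ p q : Fin n, p < q → len n (a * Equiv.swap p q) < len n a →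
      a * Equiv.swap p q = a * sTr n i ∨
        (len n (a * Equiv.swap p q * sTr n i) ≤ len n a - 2 ∧ 2 ≤ len n a) := by
    intro p q hpq hlen
    have hdq := swap_descent hpq hlen
    obtain ⟨k, hk, hke⟩ := strong_exchange (d ++ [i]) p q hpq
      (by rw [redword_wp hb]; exact hdq)
    rw [redword_wp hb] at hke
    rcases eq_or_lt_of_le (Nat.lt_succ_iff.mp (by
        simpa [List.length_append] using hk)) with hkd | hkd
    · left
      rw [← hke, hkd]
      have : (d ++ [i]).eraseIdx d.length = d := by
        rw [List.eraseIdx_eq_take_drop_succ, List.take_left]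
        have : (d ++ [i]).length = d.length + 1 := by simp
        rw [List.drop_eq_nil_of_le (by omega), List.append_nil]
      rw [this, redword_wp hd]
    · right
      have herase : (d ++ [i]).eraseIdx k = d.eraseIdx k ++ [i] := by
        rw [List.eraseIdx_append_of_lt_length hkd]
      rw [herase, wp_concat] at hke
      have h2 : a * Equiv.swap p q * sTr n i = wp (d.eraseIdx k) := by
        rw [← hke, mul_sTr_sTr]
      have h3 := len_le_length h2.symm
      rw [List.length_eraseIdx_of_lt hkd, hd.2] at h3
      have h4 := len_le_len_mul_sTr_add_one a i
      have hd2 : d.length = len n (a * sTr n i) := hd.2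
      have h5 : 1 ≤ len n (a * sTr n i) := by omega
      constructor <;> omega
  rcases lt_or_gt_of_ne hpq with h | h
  · exact key p q h hlen
  · rw [Equiv.swap_comm] at *
    exact key q p h hlen

/-- The combined lifting properties, by strong induction on `N`. -/
lemma lift_up : ∀ N : ℕ,
    (∀ (u v : Equiv.Perm (Fin n)) (i : Fin (n-1)), len n u ≤ N →
      len n (u * sTr n i) < len n u → Rle n v u →
        (len n (v * sTr n i) < len n v → Rle n (v * sTr n i) (u * sTr n i)) ∧
        (len n v < len n (v * sTr n i) → Rle n v (u * sTr n i)) ∧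
        Rle n (v * sTr n i) u) ∧
    (∀ (y v : Equiv.Perm (Fin n)) (i : Fin (n-1)), len n y ≤ N →
      len n y < len n (y * sTr n i) → Rle n v y → len n v < len n (v * sTr n i) →
        Rle n (v * sTr n i) (y * sTr n i)) := by
  intro N
  induction N using Nat.strong_induction_on with
  | _ N ih =>
  constructor
  · -- Lift
    intro u v i hN hdesc hchain
    induction hchain using Relation.ReflTransGen.head_induction_on with
    | refl =>
      refine ⟨fun _ => Rle_refl _, fun h => absurd h (by omega), Rle_mul_sTr hdesc⟩
    | @head a w h' hcw ihw =>
      -- here the goal's `u` is `a`; hypotheses hN hdesc refer to a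
      rcases Nat.lt_or_ge (len n (w * sTr n i)) (len n w) with hws | hws
      · -- s is a descent of w; use outer induction at level N-1
        have hwa : len n w < len n a := h'.2
        have hNw : len n w ≤ N - 1 := by omega
        obtain ⟨A', B', C'⟩ := (ih (N-1) (by omega)).1 w v i hNw hws hcw
        -- w ≠ a * s since that would contradict hdesc
        have hstep2 : Rle n (w * sTr n i) (a * sTr n i) := by
          rcases step_aux h' hdesc with rfl | ⟨h2, h3⟩
          · exfalso; rw [mul_sTr_sTr] at hws; omega
          · have h4 := len_le_len_mul_sTr_add_one a i
            exact Relation.ReflTransGen.single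
              ⟨step_conj h'.1, by omega⟩
        refine ⟨fun h => Rle_trans hstep2 (A' h), fun h => Rle_trans hstep2 (B' h), ?_⟩
        exact Rle_trans (Relation.ReflTransGen.single h') C'
      · -- s is an ascent of w
        have hws' : len n w < len n (w * sTr n i) :=
          lt_of_le_of_ne hws (Ne.symm (len_mul_sTr_ne w i))
        rcases step_aux h' hdesc with rfl | ⟨h2, h3⟩
        · -- w = a * s
          refine ⟨?_, ?_, ?_⟩
          · intro h
            exact Rle_trans hcw (Rle_mul_sTr h)
          · intro _
            exact hcw
          · rcases Nat.lt_or_ge (len n (v * sTr n i)) (len n v) with hv | hv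
            · refine Rle_trans (Relation.ReflTransGen.single h') (Rle_trans hcw (Rle_mul_sTr hv))
            · have hv' : len n v < len n (v * sTr n i) :=
                lt_of_le_of_ne hv (Ne.symm (len_mul_sTr_ne v i))
              have hup := (ih (N-1) (by have := h'.2; omega)).2 (a * sTr n i) v i
                (by have := h'.2; omega) (by rwa [mul_sTr_sTr]) hcw hv'
              rwa [mul_sTr_sTr] at hup
        · -- generic case
          have hwa : len n w < len n a := h'.2
          have h4 := len_le_len_mul_sTr_add_one a i
          have hR1 : Rle n (w * sTr n i) (a * sTr n i) :=
            Relation.ReflTransGen.single ⟨step_conj h'.1, by omega⟩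
          have hR2 : Rle n w (w * sTr n i) := by
            have := Rle_mul_sTr (u := w * sTr n i) (i := i) (by rwa [mul_sTr_sTr])
            rwa [mul_sTr_sTr] at this
          refine ⟨?_, ?_, ?_⟩
          · intro h
            exact Rle_trans hR1 (Rle_trans hR2 (Rle_trans hcw (Rle_mul_sTr h)))
          · intro h
            have hup := (ih (N-1) (by omega)).2 w v i (by omega) hws' hcw h
            have hv2 : Rle n v (v * sTr n i) := by
              have := Rle_mul_sTr (u := v * sTr n i) (i := i) (by rwa [mul_sTr_sTr])
              rwa [mul_sTr_sTr] at this
            exact Rle_trans hR1 (Rle_trans hup hv2)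
          · rcases Nat.lt_or_ge (len n (v * sTr n i)) (len n v) with hv | hv
            · exact Rle_trans (Relation.ReflTransGen.single h')
                (Rle_trans hcw (Rle_mul_sTr hv))
            · have hv' : len n v < len n (v * sTr n i) :=
                lt_of_le_of_ne hv (Ne.symm (len_mul_sTr_ne v i))
              have hup := (ih (N-1) (by omega)).2 w v i (by omega) hws' hcw hv'
              exact Rle_trans (Rle_mul_sTr hdesc) (Rle_trans hR1 hup)
  · -- Up
    intro y v i hN hasc hchain hvasc
    induction hchain using Relation.ReflTransGen.head_induction_on with
    | refl => exact Rle_refl _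
    | @head a w h' hcw ihw =>
      -- goal: Rle (v s) (a s), given len a ≤ N, len a < len (a s)
      -- note: ihw : the statement for w, with its own hypotheses
      rcases Nat.lt_or_ge (len n w) (len n (w * sTr n i)) with hws | hws
      · have hup := (ih (N-1) (by have := h'.2; omega)).2 w v i
          (by have := h'.2; omega) hws hcw hvasc
        have hstep2 : Rle n (w * sTr n i) (a * sTr n i) := by
          have h5 := len_mul_sTr_le w i
          have h6 := h'.2
          exact Relation.ReflTransGen.single ⟨step_conj h'.1, by omega⟩
        exact Rle_trans hstep2 hup
      · have hws' : len n (w * sTr n i) < len n w :=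
          lt_of_le_of_ne hws (len_mul_sTr_ne w i)
        have hB := ((ih (N-1) (by have := h'.2; omega)).1 w v i
          (by have := h'.2; omega) hws' hcw).2.1 hvasc
        have hup := (ih (N-1) (by have := h'.2; omega)).2 (w * sTr n i) v i
          (by have := h'.2; omega) (by rwa [mul_sTr_sTr]) hB hvasc
        rw [mul_sTr_sTr] at hup
        have hstep3 : Rle n w a := Relation.ReflTransGen.single h'
        have hstep4 : Rle n a (a * sTr n i) := by
          have := Rle_mul_sTr (u := a * sTr n i) (i := i) (by rwa [mul_sTr_sTr])
          rwa [mul_sTr_sTr] at this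
        exact Rle_trans hstep4 (Rle_trans hstep3 hup)
end BilleyAux
namespace BilleyAux
variable {n : ℕ}

lemma conv : ∀ (b : List (Fin (n-1))) (u v : Equiv.Perm (Fin n)) (c : List (Fin (n-1))),
    IsRedWord n b u → c.Sublist b → IsRedWord n c v → Rle n v u := by
  intro b
  induction b using List.reverseRecOn with
  | nil =>
    intro u v c hb hsub hc
    have hc0 : c = [] := List.sublist_nil.mp hsub
    have hu : u = 1 := by rw [← redword_wp hb]; rfl
    have hv : v = 1 := by rw [← redword_wp hc, hc0]; rfl
    rw [hu, hv]
    exact Rle_refl _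
  | append_singleton b' i ihb =>
    intro u v c hb hsub hc
    set u' := wp b' with hu'
    have hb' : IsRedWord n b' u' := by
      have := reduced_take hb b'.length
      rwa [List.take_left] at this
    have huu : u = u' * sTr n i := by
      rw [← redword_wp hb, wp_concat]
    have hlu : len n u = b'.length + 1 := by
      rw [← hb.2, List.length_append, List.length_singleton]
    have hlu' : len n u' = b'.length := hb'.2.symm
    have hasc : len n u' < len n (u' * sTr n i) := by
      rw [← huu]; omega
    obtain ⟨r₁, r₂, hcr, hr1, hr2⟩ := List.sublist_append_iff.mp hsub
    rcases List.sublist_singleton.mp hr2 with rfl | rfl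
    · -- c is a sublist of b'
      rw [List.append_nil] at hcr
      subst hcr
      have h1 : Rle n v u' := ihb u' v c hb' hr1 hc
      have h2 : Rle n u' u := by
        have h3 : len n (u * sTr n i) < len n u := by
          rw [huu, mul_sTr_sTr]; omega
        have := Rle_mul_sTr h3
        rwa [huu, mul_sTr_sTr, ← huu] at this
      exact Rle_trans h2 h1
    · -- c ends with the same letter i
      subst hcr
      set v' := wp r₁ with hv'
      have hc' : IsRedWord n r₁ v' := by
        have := reduced_take hc r₁.length
        rwa [List.take_left] at this
      have hvv : v = v' * sTr n i := by
        rw [← redword_wp hc, wp_concat]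
      have hlv : len n v = r₁.length + 1 := by
        rw [← hc.2, List.length_append, List.length_singleton]
      have hlv' : len n v' = r₁.length := hc'.2.symm
      have hvasc : len n v' < len n (v' * sTr n i) := by
        rw [← hvv]; omega
      have hR : Rle n v' u' := ihb u' v' r₁ hb' hr1 hc'
      have := (lift_up (len n u')).2 u' v' i le_rfl hasc hR hvasc
      rwa [← huu, ← hvv] at this

end BilleyAux
namespace BilleyAux
variable {n : ℕ}

/-- mapping a sorted list of indices through `get` gives a sublist -/
lemma sorted_map_get_sublist {α : Type*} {b : List α} {is : List (Fin b.length)}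
    (h : is.SortedLT) : (is.map b.get).Sublist b := by
  rw [List.sublist_iff_exists_fin_orderEmbedding_get_eq]
  have hlen : (is.map b.get).length = is.length := List.length_map _
  refine ⟨OrderEmbedding.ofStrictMono (fun ix => is.get (Fin.cast hlen ix)) ?_, ?_⟩
  · intro x y hxy
    apply h.strictMono_get
    rw [Fin.lt_def] at hxy ⊢
    simpa using hxy
  · intro ix
    simp [List.getElem_map]

/-- a sublist gives a sorted finset of indices -/
lemma sublist_exists_finset {α : Type*} [DecidableEq α] {b c : List α} (h : c.Sublist b) :
    ∃ J : Finset (Fin b.length), J.card = c.length ∧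
      (J.sort (· ≤ ·)).map b.get = c := by
  obtain ⟨f, hf⟩ := List.sublist_iff_exists_fin_orderEmbedding_get_eq.mp h
  set ls : List (Fin b.length) := (List.finRange c.length).map f with hls
  have hsorted : ls.SortedLT := by
    rw [hls]
    exact ((List.pairwise_lt_finRange c.length).map f (fun a b hab => f.strictMono hab)).sortedLT
  have hnodup : ls.Nodup := hsorted.nodup
  refine ⟨ls.toFinset, ?_, ?_⟩
  · rw [List.toFinset_card_of_nodup hnodup, hls, List.length_map, List.length_finRange]
  · rw [(List.toFinset_sort (· ≤ ·) hnodup).mpr hsorted.sortedLE.pairwise]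
    rw [hls, List.map_map]
    have : b.get ∘ f = fun ix => c.get ix := by
      funext ix
      exact (hf ix).symm
    rw [this]
    exact List.map_get_finRange c

end BilleyAux
namespace BilleyAux
variable {n : ℕ}

lemma take_succ_concat {b : List (Fin (n-1))} (j : Fin b.length) :
    b.take (j.1+1) = b.take j.1 ++ [b.get j] := by
  rw [List.take_succ]
  congr 1
  rw [List.getElem?_eq_getElem j.2]
  rfl

lemma no_descent {b : List (Fin (n-1))} {u : Equiv.Perm (Fin n)}
    (hb : IsRedWord n b u) (j : Fin b.length) :
    (wp (b.take j.1)) (loF (b.get j)) < (wp (b.take j.1)) (hiF (b.get j)) := by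
  set w := wp (b.take j.1) with hw
  have h1 : IsRedWord n (b.take j.1) w := reduced_take hb j.1
  have h2 : IsRedWord n (b.take (j.1+1)) (wp (b.take (j.1+1))) := reduced_take hb (j.1+1)
  have htake : wp (b.take (j.1+1)) = w * sTr n (b.get j) := by
    rw [take_succ_concat, wp_concat]
  have hl1 : len n w = j.1 := by
    rw [← h1.2, List.length_take, Nat.min_eq_left (le_of_lt j.2)]
  have hl2 : len n (w * sTr n (b.get j)) = j.1 + 1 := by
    rw [← htake, ← h2.2, List.length_take, Nat.min_eq_left j.2]
  exact ascent_iff.mp (by omega)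

def gNat (b : List (Fin (n-1))) (j : Fin b.length) : ℕ :=
  ((wp (b.take j.1)) (hiF (b.get j))).1 - ((wp (b.take j.1)) (loF (b.get j))).1

lemma gNat_pos {b : List (Fin (n-1))} {u : Equiv.Perm (Fin n)}
    (hb : IsRedWord n b u) (j : Fin b.length) : 0 < gNat b j := by
  have := no_descent hb j
  rw [Fin.lt_def] at this
  unfold gNat
  omega

lemma eval_rPoly {b : List (Fin (n-1))} {u : Equiv.Perm (Fin n)}
    (hb : IsRedWord n b u) (j : Fin b.length) :
    eval (fun k : Fin n => -(k.1 : ℂ)) (rPoly n b j) = (gNat b j : ℂ) := by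
  have hnd := no_descent hb j
  rw [Fin.lt_def] at hnd
  have hrp : rPoly n b j
      = rename (⇑(wp (b.take j.1))) (X (loF (b.get j)) - X (hiF (b.get j))) := rfl
  rw [hrp, eval_rename]
  simp only [map_sub, eval_X, Function.comp]
  unfold gNat
  rw [Nat.cast_sub (le_of_lt hnd)]
  ring

lemma billey_ne_zero_of_nonempty {b : List (Fin (n-1))} {u v : Equiv.Perm (Fin n)}
    (hb : IsRedWord n b u)
    (hne : (Finset.univ.filter (fun J : Finset (Fin b.length) =>
      J.card = len n v ∧
        ((J.sort (· ≤ ·)).map (fun j => sTr n (b.get j))).prod = v)).Nonempty) :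
    billeyWord n b v ≠ 0 := by
  intro h0
  have hcast := congrArg (eval (fun k : Fin n => -(k.1 : ℂ))) h0
  rw [map_zero] at hcast
  unfold billeyWord at hcast
  rw [map_sum] at hcast
  rw [Finset.sum_congr rfl (fun J _ => by
    rw [map_prod, Finset.prod_congr rfl (fun j _ => eval_rPoly hb j), ← Nat.cast_prod])] at hcast
  rw [← Nat.cast_sum] at hcast
  have hZ : (∑ J ∈ Finset.univ.filter (fun J : Finset (Fin b.length) =>
      J.card = len n v ∧
        ((J.sort (· ≤ ·)).map (fun j => sTr n (b.get j))).prod = v),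
      ∏ j ∈ J, gNat b j) = 0 := by exact_mod_cast hcast
  have hpos : 0 < ∑ J ∈ Finset.univ.filter (fun J : Finset (Fin b.length) =>
      J.card = len n v ∧
        ((J.sort (· ≤ ·)).map (fun j => sTr n (b.get j))).prod = v),
      ∏ j ∈ J, gNat b j :=
    Finset.sum_pos (fun J _ => Finset.prod_pos (fun j _ => gNat_pos hb j)) hne
  omega

end BilleyAux

theorem billey_ne_zero_iff_bruhat_le' (n : ℕ) (u v : Equiv.Perm (Fin n))
    (b : List (Fin (n - 1))) (hb : IsRedWord n b u) :
    billeyWord n b v ≠ 0 ↔ bruhatLE n v u := by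
  open BilleyAux in
  constructor
  · intro hne0
    have hFne : (Finset.univ.filter (fun J : Finset (Fin b.length) =>
        J.card = len n v ∧
          ((J.sort (· ≤ ·)).map (fun j => sTr n (b.get j))).prod = v)).Nonempty := by
      by_contra h
      rw [Finset.not_nonempty_iff_eq_empty] at h
      unfold billeyWord at hne0
      rw [h, Finset.sum_empty] at hne0
      exact hne0 rfl
    obtain ⟨J, hJ⟩ := hFne
    rw [Finset.mem_filter] at hJ
    obtain ⟨-, hcard, hprod⟩ := hJ
    refine ⟨b, hb, (J.sort (· ≤ ·)).map b.get,
      sorted_map_get_sublist (Finset.sortedLT_sort J), ?_, ?_⟩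
    · rw [List.map_map]
      exact hprod
    · rw [List.length_map, Finset.length_sort, hcard]
  · rintro ⟨b₂, hb₂, c, hcsub, hcred⟩
    have hR : Rle n v u := conv b₂ u v c hb₂ hcsub hcred
    obtain ⟨c', hc'sub, hc'red⟩ := claimA hR b hb
    obtain ⟨J, hJcard, hJsort⟩ := sublist_exists_finset hc'sub
    apply billey_ne_zero_of_nonempty hb
    refine ⟨J, Finset.mem_filter.mpr ⟨Finset.mem_univ _, ?_, ?_⟩⟩
    · rw [hJcard]; exact hc'red.2
    · have : ((J.sort (· ≤ ·)).map (fun j => sTr n (b.get j))).prod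
          = (((J.sort (· ≤ ·)).map b.get).map (sTr n)).prod := by
        rw [List.map_map]; rfl
      rw [this, hJsort]
      exact hcred.1 ▸ (hc'red.1 : _)


/-- For every `u, v ∈ W` and every choice of reduced word for `u`, the
Billey polynomial `σ_v(u)` is nonzero if and only if `v ≤ u` in Bruhat order. -/
theorem billey_ne_zero_iff_bruhat_le (n : ℕ) (hn : 2 ≤ n) (u v : Equiv.Perm (Fin n))
    (b : List (Fin (n - 1))) (hb : IsRedWord n b u) :
    billeyWord n b v ≠ 0 ↔ bruhatLE n v u :=
  billey_ne_zero_iff_bruhat_le' n u v b hb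

end
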